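/- Let Q be a tidy symmetric multicategory with category of objects C equivalent to the discrete category S via C → S, and let f : X → S be a function. Then the pullback multicategory Q_X, whose object category o(Q_X) is the pullback of X → S ← C and whose hom-sets are Q_X(a_1,…,a_k; a) ≅ Q(fh(a_1),…,fh(a_k); fh(a)), is again tidy. -/

import Mathlib

open CategoryTheory

universe u

/-- A (slim rendering of a) symmetric multicategory with a *category* of objects: arrows
have a finite family of sources and one target, there are identities, multicomposition,
and a symmetric action permuting the sources. -/
structure SymMulticategory where
  Obj : Type u
  [instCat : SmallCategory Obj]
  Hom : ∀ {I : Type} [Fintype I], (I → Obj) → Obj → Type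
  ident : ∀ a : Obj, Hom (fun _ : Fin 1 => a) a
  comp : ∀ {I : Type} [Fintype I] [DecidableEq I] {J : I → Type} [∀ i, Fintype (J i)]
    {xs : I → Obj} {a : Obj} {ys : ∀ i, J i → Obj},
    Hom xs a → (∀ i, Hom (ys i) (xs i)) → Hom (fun p : Σ i, J i => ys p.1 p.2) a
  symm : ∀ {I : Type} [Fintype I] (σ : Equiv.Perm I) {xs : I → Obj} {a : Obj},
    Hom xs a → Hom (xs ∘ σ) a

attribute [instance] SymMulticategory.instCat

/-- `Q` is freely symmetric: the symmetric action on arrows is free. -/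
def SymMulticategory.FreelySymmetric (Q : SymMulticategory) : Prop :=
  ∀ {I : Type} [Fintype I] (σ : Equiv.Perm I) {xs : I → Q.Obj} {a : Q.Obj}
    (f : Q.Hom xs a), HEq (Q.symm σ f) f → σ = 1

/-- `Q` is tidy: it is freely symmetric and its category of objects is equivalent to a
discrete category. -/
def SymMulticategory.Tidy (Q : SymMulticategory) : Prop :=
  Q.FreelySymmetric ∧ ∃ S : Type, Nonempty (Q.Obj ≌ Discrete S)

/-- The pullback multicategory `Q_X` of a symmetric multicategory `Q` whose category of
objects `C` is equivalent to the discrete category on `S` via `e`, along a function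
`f : X → S`:  its category of objects is the pullback of `X → S ← C` (so that the
projection `h : o(Q_X) → X` is an equivalence), and its hom-sets are
`Q_X(a_1,…,a_k; a) ≅ Q(fh(a_1),…,fh(a_k); fh(a))`, with composition, identities and the
symmetric action inherited from `Q`. -/
def SymMulticategory.pullback (Q : SymMulticategory) (S : Type) (e : Q.Obj ⥤ Discrete S)
    (X : Type) (f : X → S) : SymMulticategory where
  Obj := ObjectProperty.FullSubcategory fun p : Discrete X × Q.Obj => f p.1.as = (e.obj p.2).as
  Hom xs a := Q.Hom (fun i => (xs i).obj.2) a.obj.2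
  ident a := Q.ident a.obj.2
  comp F G := Q.comp F G
  symm := fun {I} _ σ {xs} {a} F => Q.symm σ F

/-- If `Q` is a tidy symmetric multicategory with category of objects
equivalent to the discrete category on `S`, and `f : X → S` is a function, then the
pullback multicategory `Q_X` is again tidy. -/
theorem pullback_tidy (Q : SymMulticategory) (S : Type) (e : Q.Obj ⥤ Discrete S)
    [e.IsEquivalence] (X : Type) (f : X → S) (hQ : Q.Tidy) :
    (Q.pullback S e X f).Tidy := by
  constructor
  · intro I _ σ xs a g h
    exact hQ.1 σ g h
  · refine ⟨X, ⟨?_⟩⟩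
    haveI : ∀ (c c' : Q.Obj), Subsingleton (c ⟶ c') := fun c c' =>
      ⟨fun g g' => e.map_injective (Subsingleton.elim _ _)⟩
    let F : (Q.pullback S e X f).Obj ⥤ Discrete X :=
      ObjectProperty.ι _ ⋙ CategoryTheory.Prod.fst _ _
    haveI : F.Faithful := ⟨by
      intro a b g g'
      intro _
      apply ObjectProperty.hom_ext
      apply Prod.ext
      · exact Subsingleton.elim _ _
      · exact Subsingleton.elim _ _⟩
    haveI : F.Full := ⟨by
      intro a b g
      have hg : a.obj.1.as = b.obj.1.as := Discrete.eq_of_hom (show a.obj.1 ⟶ b.obj.1 from g)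
      have hab : (e.obj a.obj.2).as = (e.obj b.obj.2).as := by
        rw [← a.property, ← b.property, hg]
      refine ⟨ObjectProperty.homMk (g, e.preimage (eqToHom (Discrete.ext hab))), rfl⟩⟩
    haveI : F.EssSurj := ⟨by
      intro x
      obtain ⟨c, ⟨i⟩⟩ := Functor.EssSurj.mem_essImage (F := e) ⟨f x.as⟩
      refine ⟨⟨(x, c), ?_⟩, ⟨Iso.refl _⟩⟩
      exact (Discrete.eq_of_hom i.hom : (e.obj c).as = f x.as).symm⟩
    haveI : F.IsEquivalence := {}
    exact F.asEquivalence
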